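/- Let C > 1 and ε = min{C−1, 1/3}. There exist Δ₀ = Δ₀(ε) and ℓ₀ = ℓ₀(ε) such that for every integer Δ > Δ₀, every integer k > CΔ/ln Δ, every ℓ > ℓ₀, and any two distinct colors c₁, c₂ ∈ [k], there exists a coupling ν of μ^↓_{c₁,ℓ} and μ^↓_{c₂,ℓ} such that the probability over (X,Y) drawn from ν that H_ℓ(X,Y) > Δ^{εℓ/8} is at most e^{−Δ^{εℓ/10}}. -/

import Mathlib

/-- Vertices of the complete rooted tree of depth `ℓ` and branching factor `Δ`:
a vertex is the path leading to it from the root, i.e. a pair of a depth `i ≤ ℓ`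
and a function `Fin i → Fin Δ`. -/
abbrev TVertex (Δ ℓ : ℕ) : Type := Σ i : Fin (ℓ + 1), Fin i.val → Fin Δ

/-- The root of the tree. -/
def troot (Δ ℓ : ℕ) : TVertex Δ ℓ := ⟨⟨0, Nat.succ_pos ℓ⟩, fun i => i.elim0⟩

/-- The `j`-th child of a vertex `v` of depth `< ℓ`. -/
def tchild {Δ ℓ : ℕ} (v : TVertex Δ ℓ) (h : v.1.val < ℓ) (j : Fin Δ) : TVertex Δ ℓ :=
  ⟨⟨v.1.val + 1, Nat.succ_lt_succ h⟩, Fin.snoc v.2 j⟩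

/-- A proper `k`-coloring of the tree: adjacent (parent/child) vertices get distinct colors. -/
def ProperColoring (Δ ℓ k : ℕ) (σ : TVertex Δ ℓ → Fin k) : Prop :=
  ∀ (v : TVertex Δ ℓ) (h : v.1.val < ℓ) (j : Fin Δ), σ v ≠ σ (tchild v h j)

/-- The leaf determined by a root-to-leaf path. -/
def leafVertex {Δ ℓ : ℕ} (f : Fin ℓ → Fin Δ) : TVertex Δ ℓ := ⟨⟨ℓ, Nat.lt_succ_self ℓ⟩, f⟩

/-- Restriction of a coloring of the tree to the leaves. -/
def leafColoring {Δ ℓ k : ℕ} (σ : TVertex Δ ℓ → Fin k) : (Fin ℓ → Fin Δ) → Fin k :=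
  fun f => σ (leafVertex f)

/-- A total leaf coloring, viewed as a partial one (no `⋆`s). -/
def toPartial {Δ ℓ k : ℕ} (X : (Fin ℓ → Fin Δ) → Fin k) : (Fin ℓ → Fin Δ) → Option (Fin k) :=
  fun f => some (X f)

/-- Probability of the event `E` under the uniform measure `μ_ℓ` on proper colorings. -/
noncomputable def treeProb (Δ ℓ k : ℕ) (E : (TVertex Δ ℓ → Fin k) → Prop) : ℝ :=
  (Nat.card {σ : TVertex Δ ℓ → Fin k // ProperColoring Δ ℓ k σ ∧ E σ} : ℝ) /
    (Nat.card {σ : TVertex Δ ℓ → Fin k // ProperColoring Δ ℓ k σ} : ℝ)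

/-- Expectation of `f` under the uniform measure `μ_ℓ` on proper colorings. -/
noncomputable def treeExp (Δ ℓ k : ℕ) (f : (TVertex Δ ℓ → Fin k) → ℝ) : ℝ :=
  (∑ σ : TVertex Δ ℓ → Fin k, Set.indicator {σ | ProperColoring Δ ℓ k σ} f σ) /
    (Nat.card {σ : TVertex Δ ℓ → Fin k // ProperColoring Δ ℓ k σ} : ℝ)

/-- `σ` agrees with the partial leaf coloring `X` on every leaf colored by `X`. -/
def AgreesOn {Δ ℓ k : ℕ} (σ : TVertex Δ ℓ → Fin k) (X : (Fin ℓ → Fin Δ) → Option (Fin k)) : Prop :=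
  ∀ (f : Fin ℓ → Fin Δ) (c : Fin k), X f = some c → leafColoring σ f = c

/-- `X` is an allowed partial coloring of the leaves. -/
def AllowedP (Δ ℓ k : ℕ) (X : (Fin ℓ → Fin Δ) → Option (Fin k)) : Prop :=
  ∃ σ, ProperColoring Δ ℓ k σ ∧ AgreesOn σ X

/-- `μ_ℓ(σ(root) = c | σ` agrees with `X` at the leaves`)`. -/
noncomputable def condProbRootP (Δ ℓ k : ℕ) (X : (Fin ℓ → Fin Δ) → Option (Fin k))
    (c : Fin k) : ℝ :=
  (Nat.card {σ : TVertex Δ ℓ → Fin k //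
      ProperColoring Δ ℓ k σ ∧ AgreesOn σ X ∧ σ (troot Δ ℓ) = c} : ℝ) /
    (Nat.card {σ : TVertex Δ ℓ → Fin k // ProperColoring Δ ℓ k σ ∧ AgreesOn σ X} : ℝ)

/-- Restriction of a vector indexed by the leaves of `T_{ℓ+1}` to the leaves below
the `j`-th child of the root. -/
def childRestrict {Δ ℓ : ℕ} {β : Sort*} (X : (Fin (ℓ + 1) → Fin Δ) → β) (j : Fin Δ) :
    (Fin ℓ → Fin Δ) → β := fun g => X (Fin.cons j g)

/-- The recursively defined quantity `P_h(X, c)`. -/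
noncomputable def Pfun (Δ k : ℕ) : (h : ℕ) → ((Fin h → Fin Δ) → Option (Fin k)) → Fin k → ℝ
  | 0, X, c =>
    match X (fun i => i.elim0) with
    | none => 1 / (k : ℝ)
    | some d => if d = c then 1 else 0
  | h + 1, X, c =>
    (∏ j : Fin Δ, (1 - Pfun Δ k h (childRestrict X j) c)) /
      ∑ d : Fin k, ∏ j : Fin Δ, (1 - Pfun Δ k h (childRestrict X j) d)

/-- Unbiasing partial colorings of the leaves of `T_ℓ` (meaningful for `ℓ ≥ 1`). -/
def Unbiasing (Δ k : ℕ) (ε : ℝ) : (ℓ : ℕ) → ((Fin ℓ → Fin Δ) → Option (Fin k)) → Prop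
  | 0, _ => True
  | 1, X => (Δ : ℝ) ^ (ε / 2) ≤ (Nat.card {c : Fin k // ∀ f, X f ≠ some c} : ℝ)
  | ℓ + 2, X =>
      (Nat.card {j : Fin Δ // ¬ Unbiasing Δ k ε (ℓ + 1) (childRestrict X j)} : ℝ) ≤
        (Δ : ℝ) ^ ((1 : ℝ) - ε)

/-- Auxiliary notion: every subtree vertex of height `≥ t` has an unbiasing restriction. -/
def HighlyUnbiasingAux (Δ k : ℕ) (ε t : ℝ) :
    (h : ℕ) → ((Fin h → Fin Δ) → Option (Fin k)) → Prop
  | 0, _ => True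
  | h + 1, X => ((t ≤ (h : ℝ) + 1) → Unbiasing Δ k ε (h + 1) X) ∧
      ∀ j : Fin Δ, HighlyUnbiasingAux Δ k ε t h (childRestrict X j)

/-- Highly unbiasing partial colorings of the leaves of `T_ℓ`: the restriction to the
leaves below `v` is unbiasing for every vertex `v` at distance `≥ εℓ` from the leaves. -/
def HighlyUnbiasing (Δ k : ℕ) (ε : ℝ) (ℓ : ℕ) (X : (Fin ℓ → Fin Δ) → Option (Fin k)) : Prop :=
  HighlyUnbiasingAux Δ k ε (ε * ℓ) ℓ X

/-- `μ↓_{c,ℓ}`: the distribution of the leaf coloring conditioned on the root color `c`. -/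
noncomputable def downDist (Δ ℓ k : ℕ) (c : Fin k) (X : (Fin ℓ → Fin Δ) → Fin k) : ℝ :=
  (Nat.card {σ : TVertex Δ ℓ → Fin k //
      ProperColoring Δ ℓ k σ ∧ σ (troot Δ ℓ) = c ∧ leafColoring σ = X} : ℝ) /
    (Nat.card {σ : TVertex Δ ℓ → Fin k // ProperColoring Δ ℓ k σ ∧ σ (troot Δ ℓ) = c} : ℝ)

/-- `μ↑_{X,ℓ}`: the distribution of the root color given the (total) leaf coloring `X`. -/
noncomputable def upDist (Δ ℓ k : ℕ) (X : (Fin ℓ → Fin Δ) → Fin k) (c : Fin k) : ℝ :=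
  condProbRootP Δ ℓ k (toPartial X) c

/-- `μ↓↑_{c,ℓ}`: sample leaves from `μ↓_{c,ℓ}`, then a root color from `μ↑`. -/
noncomputable def downUp (Δ ℓ k : ℕ) (c c' : Fin k) : ℝ :=
  ∑ X : (Fin ℓ → Fin Δ) → Fin k, downDist Δ ℓ k c X * upDist Δ ℓ k X c'

/-- Hamming distance between two leaf colorings. -/
noncomputable def leafHamming {Δ ℓ k : ℕ} (X Y : (Fin ℓ → Fin Δ) → Fin k) : ℕ :=
  Nat.card {f : Fin ℓ → Fin Δ // X f ≠ Y f}

/-- Total variation distance between two distributions on `Fin k`. -/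
noncomputable def tvDist {k : ℕ} (p q : Fin k → ℝ) : ℝ :=
  (∑ c : Fin k, |p c - q c|) / 2

/-- `ν` is a coupling of the distributions `p` and `q`. -/
def IsCoupling {α β : Type*} [Fintype α] [Fintype β] (ν : α × β → ℝ)
    (p : α → ℝ) (q : β → ℝ) : Prop :=
  (∀ z, 0 ≤ ν z) ∧ (∀ x, ∑ y : β, ν (x, y) = p x) ∧ (∀ y, ∑ x : α, ν (x, y) = q y)


/-! ### Tree combinatorics -/

section Tree

variable {Δ k : ℕ}

/-- Ancestor of a vertex at depth `i`. -/
def vanc {ℓ : ℕ} (v : TVertex Δ ℓ) (i : ℕ) (hi : i ≤ v.1.val) : TVertex Δ ℓ :=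
  ⟨⟨i, lt_of_le_of_lt hi v.1.isLt⟩, fun t => v.2 ⟨t.val, lt_of_lt_of_le t.isLt hi⟩⟩

lemma vanc_self {ℓ : ℕ} (v : TVertex Δ ℓ) : vanc v v.1.val le_rfl = v := by
  obtain ⟨⟨d, hd⟩, p⟩ := v
  unfold vanc
  congr 1

lemma vanc_zero {ℓ : ℕ} (v : TVertex Δ ℓ) : vanc v 0 (Nat.zero_le _) = troot Δ ℓ := by
  unfold vanc troot
  congr 1
  funext t
  exact t.elim0

lemma vanc_tchild_le {ℓ : ℕ} (v : TVertex Δ ℓ) (h : v.1.val < ℓ) (j : Fin Δ) (i : ℕ)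
    (hi : i ≤ v.1.val) :
    vanc (tchild v h j) i (le_trans hi (Nat.le_succ _)) = vanc v i hi := by
  unfold vanc tchild
  congr 1
  funext t
  show (Fin.snoc v.2 j : Fin (v.1.val+1) → Fin Δ) _ = _
  have h1 : (⟨t.val, lt_of_lt_of_le t.isLt (le_trans hi (Nat.le_succ _))⟩ : Fin (v.1.val+1))
      = Fin.castSucc ⟨t.val, lt_of_lt_of_le t.isLt hi⟩ := rfl
  rw [h1, Fin.snoc_castSucc]

lemma depth_eq_zero_eq_troot {ℓ : ℕ} (v : TVertex Δ ℓ) (h : v.1.val = 0) : v = troot Δ ℓ := by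
  obtain ⟨⟨d, hd⟩, p⟩ := v
  subst h
  unfold troot
  congr 1
  funext t
  exact t.elim0

end Tree

section Chain

variable {Δ k : ℕ} (c₁ c₂ : Fin k)

/-- The root-to-`v` path uses only colors `c₁, c₂`. -/
def onChain {ℓ : ℕ} (σ : TVertex Δ ℓ → Fin k) (v : TVertex Δ ℓ) : Prop :=
  ∀ (i : ℕ) (hi : i ≤ v.1.val), σ (vanc v i hi) = c₁ ∨ σ (vanc v i hi) = c₂

variable {c₁ c₂}

lemma onChain_self {ℓ : ℕ} {σ : TVertex Δ ℓ → Fin k} {v : TVertex Δ ℓ}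
    (h : onChain c₁ c₂ σ v) : σ v = c₁ ∨ σ v = c₂ := by
  have := h v.1.val le_rfl
  rwa [vanc_self] at this

lemma onChain_root_color {ℓ : ℕ} {σ : TVertex Δ ℓ → Fin k} {v : TVertex Δ ℓ}
    (h : onChain c₁ c₂ σ v) : σ (troot Δ ℓ) = c₁ ∨ σ (troot Δ ℓ) = c₂ := by
  have := h 0 (Nat.zero_le _)
  rwa [vanc_zero] at this

lemma onChain_tchild {ℓ : ℕ} {σ : TVertex Δ ℓ → Fin k} {v : TVertex Δ ℓ}
    (h : v.1.val < ℓ) (j : Fin Δ) :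
    onChain c₁ c₂ σ (tchild v h j) ↔
      onChain c₁ c₂ σ v ∧ (σ (tchild v h j) = c₁ ∨ σ (tchild v h j) = c₂) := by
  constructor
  · intro hc
    refine ⟨fun i hi => ?_, ?_⟩
    · have := hc i (le_trans hi (Nat.le_succ _))
      rwa [vanc_tchild_le] at this
    · exact onChain_self hc
  · rintro ⟨hv, hcol⟩ i hi
    rcases Nat.lt_or_ge i (v.1.val + 1) with hlt | hge
    · have hi' : i ≤ v.1.val := Nat.lt_succ_iff.mp hlt
      have := hv i hi'
      rw [← vanc_tchild_le v h j i hi'] at this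
      convert this using 3
    · have hieq : i = v.1.val + 1 := le_antisymm hi hge
      subst hieq
      have hv2 : vanc (tchild v h j) (v.1.val + 1) hi = tchild v h j :=
        vanc_self (tchild v h j)
      rw [hv2]
      exact hcol

lemma onChain_troot {ℓ : ℕ} {σ : TVertex Δ ℓ → Fin k} :
    onChain c₁ c₂ σ (troot Δ ℓ) ↔ (σ (troot Δ ℓ) = c₁ ∨ σ (troot Δ ℓ) = c₂) := by
  constructor
  · exact onChain_root_color
  · intro h i hi
    have h0 : i = 0 := Nat.le_zero.mp hi
    subst h0
    rwa [vanc_zero]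

variable (c₁ c₂)

open Classical in
/-- The Kempe swap of the chain component of the root. -/
noncomputable def kem {ℓ : ℕ} (σ : TVertex Δ ℓ → Fin k) : TVertex Δ ℓ → Fin k :=
  fun v => if onChain c₁ c₂ σ v then Equiv.swap c₁ c₂ (σ v) else σ v

variable {c₁ c₂}

lemma pair_swap_iff (x : Fin k) :
    (Equiv.swap c₁ c₂ x = c₁ ∨ Equiv.swap c₁ c₂ x = c₂) ↔ (x = c₁ ∨ x = c₂) := by
  by_cases h1 : x = c₁
  · subst h1; simp [Equiv.swap_apply_left]
  by_cases h2 : x = c₂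
  · subst h2; simp [Equiv.swap_apply_right]
  · rw [Equiv.swap_apply_of_ne_of_ne h1 h2]

lemma kem_pair_iff {ℓ : ℕ} (σ : TVertex Δ ℓ → Fin k) (v : TVertex Δ ℓ) :
    (kem c₁ c₂ σ v = c₁ ∨ kem c₁ c₂ σ v = c₂) ↔ (σ v = c₁ ∨ σ v = c₂) := by
  by_cases h : onChain c₁ c₂ σ v
  · simp only [kem, if_pos h]
    exact pair_swap_iff _
  · simp only [kem, if_neg h]

lemma onChain_kem {ℓ : ℕ} (σ : TVertex Δ ℓ → Fin k) (v : TVertex Δ ℓ) :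
    onChain c₁ c₂ (kem c₁ c₂ σ) v ↔ onChain c₁ c₂ σ v := by
  unfold onChain
  constructor <;> intro h i hi <;> [rw [← kem_pair_iff σ]; rw [kem_pair_iff σ]] <;> exact h i hi

lemma kem_kem {ℓ : ℕ} (σ : TVertex Δ ℓ → Fin k) : kem c₁ c₂ (kem c₁ c₂ σ) = σ := by
  funext v
  by_cases h : onChain c₁ c₂ σ v
  · have h2 : onChain c₁ c₂ (kem c₁ c₂ σ) v := (onChain_kem σ v).mpr h
    simp only [kem, if_pos h, if_pos h2, Equiv.swap_apply_self]
  · have h2 : ¬ onChain c₁ c₂ (kem c₁ c₂ σ) v := fun hh => h ((onChain_kem σ v).mp hh)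
    simp only [kem, if_neg h, if_neg h2]

lemma kem_proper {ℓ : ℕ} {σ : TVertex Δ ℓ → Fin k} (hσ : ProperColoring Δ ℓ k σ) :
    ProperColoring Δ ℓ k (kem c₁ c₂ σ) := by
  intro v h j
  by_cases hw : onChain c₁ c₂ σ (tchild v h j)
  · have hv : onChain c₁ c₂ σ v := ((onChain_tchild h j).mp hw).1
    simp only [kem, if_pos hw, if_pos hv]
    intro heq
    exact hσ v h j ((Equiv.swap c₁ c₂).injective heq)
  · by_cases hv : onChain c₁ c₂ σ v
    · simp only [kem, if_neg hw, if_pos hv]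
      intro heq
      apply hw
      rw [onChain_tchild h j]
      refine ⟨hv, ?_⟩
      rw [← heq]
      exact (pair_swap_iff _).mpr (onChain_self hv)
    · simp only [kem, if_neg hw, if_neg hv]
      exact hσ v h j

lemma kem_troot {ℓ : ℕ} {σ : TVertex Δ ℓ → Fin k}
    (h : σ (troot Δ ℓ) = c₁ ∨ σ (troot Δ ℓ) = c₂) :
    kem c₁ c₂ σ (troot Δ ℓ) = Equiv.swap c₁ c₂ (σ (troot Δ ℓ)) := by
  simp only [kem, if_pos (onChain_troot.mpr h)]

lemma kem_ne_iff {ℓ : ℕ} (hne : c₁ ≠ c₂) (σ : TVertex Δ ℓ → Fin k) (v : TVertex Δ ℓ) :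
    kem c₁ c₂ σ v ≠ σ v ↔ onChain c₁ c₂ σ v := by
  by_cases h : onChain c₁ c₂ σ v
  · simp only [kem, if_pos h, iff_true, h]
    rcases onChain_self h with h1 | h1 <;> rw [h1]
    · rw [Equiv.swap_apply_left]; exact hne.symm
    · rw [Equiv.swap_apply_right]; exact hne
  · simp only [kem, if_neg h, ne_eq, not_true_eq_false, iff_false, not_not]
    simp [h]

end Chain

/-! ### Subtree decomposition -/

section Split

variable {Δ k : ℕ}

lemma tv_ext {ℓ : ℕ} {i : ℕ} (h1 h2 : i < ℓ + 1) {p q : Fin i → Fin Δ}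
    (hpq : ∀ t, p t = q t) : (⟨⟨i, h1⟩, p⟩ : TVertex Δ ℓ) = ⟨⟨i, h2⟩, q⟩ := by
  have hq : p = q := funext hpq
  subst hq
  rfl

/-- Embed the subtree below the `j`-th child of the root. -/
def emb {h : ℕ} (j : Fin Δ) (v : TVertex Δ h) : TVertex Δ (h + 1) :=
  ⟨⟨v.1.val + 1, Nat.succ_lt_succ v.1.isLt⟩, Fin.cons j v.2⟩

/-- Restrict a coloring to the subtree below the `j`-th child. -/
def subC {h : ℕ} (j : Fin Δ) (σ : TVertex Δ (h + 1) → Fin k) : TVertex Δ h → Fin k :=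
  fun v => σ (emb j v)

/-- Combine a root color and subtree colorings. -/
def mrg {h : ℕ} (a : Fin k) (τ : Fin Δ → TVertex Δ h → Fin k) : TVertex Δ (h + 1) → Fin k :=
  fun v =>
    match v with
    | ⟨⟨0, _⟩, _⟩ => a
    | ⟨⟨i + 1, hi⟩, p⟩ => τ (p 0) ⟨⟨i, Nat.lt_of_succ_lt_succ hi⟩, fun t => p t.succ⟩

lemma mrg_troot {h : ℕ} (a : Fin k) (τ : Fin Δ → TVertex Δ h → Fin k) :
    mrg a τ (troot Δ (h + 1)) = a := rfl

lemma subC_mrg {h : ℕ} (a : Fin k) (τ : Fin Δ → TVertex Δ h → Fin k) (j : Fin Δ) :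
    subC j (mrg a τ) = τ j := by
  funext v
  obtain ⟨⟨i, hi⟩, p⟩ := v
  show τ ((Fin.cons j p : Fin (i+1) → Fin Δ) 0) _ = _
  rw [Fin.cons_zero]
  congr 1

lemma mrg_split {h : ℕ} (σ : TVertex Δ (h + 1) → Fin k) :
    mrg (σ (troot Δ (h + 1))) (fun j => subC j σ) = σ := by
  funext v
  obtain ⟨⟨i, hi⟩, p⟩ := v
  match i, hi, p with
  | 0, hi, p =>
    show σ (troot Δ (h+1)) = _
    congr 1
    exact (depth_eq_zero_eq_troot _ rfl).symm
  | i + 1, hi, p =>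
    show σ (emb (p 0) _) = σ ⟨⟨i+1, hi⟩, p⟩
    congr 1
    refine tv_ext _ hi (fun t => ?_)
    show Fin.cons (p 0) (Fin.tail p) t = p t
    rw [Fin.cons_self_tail]

/-- Colorings of `T_{h+1}` split as a root color plus `Δ` colorings of `T_h`. -/
def splitE {h : ℕ} : (TVertex Δ (h + 1) → Fin k) ≃ Fin k × (Fin Δ → TVertex Δ h → Fin k) where
  toFun σ := (σ (troot Δ (h + 1)), fun j => subC j σ)
  invFun x := mrg x.1 x.2
  left_inv σ := mrg_split σ
  right_inv x := by
    obtain ⟨a, τ⟩ := x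
    refine Prod.ext ?_ ?_
    · exact mrg_troot a τ
    · funext j
      exact subC_mrg a τ j

lemma emb_tchild {h : ℕ} (j : Fin Δ) (v : TVertex Δ h) (hv : v.1.val < h) (x : Fin Δ) :
    emb j (tchild v hv x) = tchild (emb j v) (Nat.succ_lt_succ hv) x := by
  unfold emb tchild
  refine tv_ext _ _ (fun t => ?_)
  show (Fin.cons j (Fin.snoc v.2 x) : Fin (v.1.val+2) → Fin Δ) t
      = (Fin.snoc (Fin.cons j v.2) x : Fin (v.1.val+2) → Fin Δ) t
  refine Fin.cases ?_ (fun s => ?_) t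
  · have e0 : (0 : Fin (v.1.val + 2)) = Fin.castSucc (0 : Fin (v.1.val + 1)) := rfl
    rw [Fin.cons_zero, e0, Fin.snoc_castSucc, Fin.cons_zero]
  · rw [Fin.cons_succ]
    refine Fin.lastCases ?_ (fun u => ?_) s
    · rw [Fin.snoc_last, Fin.succ_last, Fin.snoc_last]
    · rw [Fin.snoc_castSucc, Fin.succ_castSucc, Fin.snoc_castSucc, Fin.cons_succ]

lemma troot_tchild {h : ℕ} (x : Fin Δ) (hr : (troot Δ (h+1)).1.val < h + 1) :
    tchild (troot Δ (h+1)) hr x = emb x (troot Δ h) := by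
  unfold troot tchild emb
  refine tv_ext _ _ (fun t => ?_)
  have h0 : t = (0 : Fin 1) := Fin.ext (Nat.lt_one_iff.mp t.isLt)
  subst h0
  show (Fin.snoc _ x : Fin 1 → Fin Δ) 0 = (Fin.cons x _ : Fin 1 → Fin Δ) 0
  have e0 : (0 : Fin 1) = Fin.last 0 := rfl
  rw [Fin.cons_zero, e0, Fin.snoc_last]

lemma emb_depth {h : ℕ} (j : Fin Δ) (v : TVertex Δ h) : (emb j v).1.val = v.1.val + 1 := rfl

lemma vertex_cases {h : ℕ} (v : TVertex Δ (h + 1)) :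
    v = troot Δ (h + 1) ∨ ∃ (j : Fin Δ) (w : TVertex Δ h), v = emb j w := by
  obtain ⟨⟨i, hi⟩, p⟩ := v
  match i, hi, p with
  | 0, hi, p => exact Or.inl (depth_eq_zero_eq_troot _ rfl)
  | i + 1, hi, p =>
    refine Or.inr ⟨p 0, ⟨⟨i, Nat.lt_of_succ_lt_succ hi⟩, Fin.tail p⟩, ?_⟩
    refine tv_ext hi _ (fun t => ?_)
    show p t = Fin.cons (p 0) (Fin.tail p) t
    rw [Fin.cons_self_tail]

lemma proper_split {h : ℕ} (σ : TVertex Δ (h + 1) → Fin k) :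
    ProperColoring Δ (h+1) k σ ↔
      ∀ j : Fin Δ, subC j σ (troot Δ h) ≠ σ (troot Δ (h+1)) ∧
        ProperColoring Δ h k (subC j σ) := by
  constructor
  · intro P j
    constructor
    · have hr : (troot Δ (h+1)).1.val < h + 1 := Nat.succ_pos h
      have := P (troot Δ (h+1)) hr j
      rw [troot_tchild j hr] at this
      exact Ne.symm this
    · intro v hv x
      have := P (emb j v) (Nat.succ_lt_succ hv) x
      show σ (emb j v) ≠ σ (emb j (tchild v hv x))
      rw [emb_tchild j v hv x]
      exact this
  · intro H v hv x
    rcases vertex_cases v with rfl | ⟨j, w, rfl⟩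
    · rw [troot_tchild x hv]
      exact Ne.symm (H x).1
    · have hw : w.1.val < h := Nat.lt_of_succ_lt_succ hv
      have := (H j).2 w hw x
      show σ (emb j w) ≠ σ (tchild (emb j w) hv x)
      rw [← emb_tchild j w hw x]
      exact this

end Split

/-! ### Chain leaves and their recursion -/

section ZSec

variable {Δ k : ℕ} {c₁ c₂ : Fin k}

lemma vanc_emb {h : ℕ} (j : Fin Δ) (v : TVertex Δ h) (i : ℕ) (hi : i ≤ v.1.val) :
    vanc (emb j v) (i + 1) (Nat.succ_le_succ hi) = emb j (vanc v i hi) := by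
  unfold vanc emb
  refine tv_ext _ _ (fun t => ?_)
  show (Fin.cons j v.2 : Fin (v.1.val + 1) → Fin Δ)
      ⟨t.val, lt_of_lt_of_le t.isLt (Nat.succ_le_succ hi)⟩
    = (Fin.cons j (fun s : Fin i => v.2 ⟨s.val, lt_of_lt_of_le s.isLt hi⟩)
        : Fin (i+1) → Fin Δ) t
  refine Fin.cases ?_ (fun s => ?_) t
  · have e0 : (⟨(0 : Fin (i+1)).val, lt_of_lt_of_le (0 : Fin (i+1)).isLt
        (Nat.succ_le_succ hi)⟩ : Fin (v.1.val + 1)) = 0 := rfl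
    rw [Fin.cons_zero, e0, Fin.cons_zero]
  · have es : (⟨(s.succ : Fin (i+1)).val, lt_of_lt_of_le (s.succ : Fin (i+1)).isLt
        (Nat.succ_le_succ hi)⟩ : Fin (v.1.val + 1))
        = Fin.succ ⟨s.val, lt_of_lt_of_le s.isLt hi⟩ := rfl
    rw [Fin.cons_succ, es, Fin.cons_succ]

lemma onChain_emb {h : ℕ} (σ : TVertex Δ (h+1) → Fin k) (j : Fin Δ) (v : TVertex Δ h) :
    onChain c₁ c₂ σ (emb j v) ↔
      ((σ (troot Δ (h+1)) = c₁ ∨ σ (troot Δ (h+1)) = c₂) ∧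
        onChain c₁ c₂ (subC j σ) v) := by
  constructor
  · intro H
    refine ⟨onChain_root_color H, fun i hi => ?_⟩
    have := H (i+1) (Nat.succ_le_succ hi)
    rwa [vanc_emb j v i hi] at this
  · rintro ⟨hroot, H⟩ i hi
    match i, hi with
    | 0, hi => rwa [vanc_zero]
    | i + 1, hi =>
      have hi' : i ≤ v.1.val := Nat.lt_succ_iff.mp hi
      have := H i hi'
      have he : vanc (emb j v) (i+1) hi = emb j (vanc v i hi') := vanc_emb j v i hi'
      rw [he]
      exact this

lemma leafVertex_cons {h : ℕ} (j : Fin Δ) (g : Fin h → Fin Δ) :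
    leafVertex (Fin.cons j g) = emb j (leafVertex g) := rfl

/-- Number of leaves whose root path uses only colors `c₁, c₂`. -/
noncomputable def Zch (c₁ c₂ : Fin k) {ℓ : ℕ} (σ : TVertex Δ ℓ → Fin k) : ℕ :=
  Nat.card {f : Fin ℓ → Fin Δ // onChain c₁ c₂ σ (leafVertex f)}

lemma leafVertex_zero (f : Fin 0 → Fin Δ) : leafVertex f = troot Δ 0 :=
  depth_eq_zero_eq_troot _ rfl

lemma Zch_zero (σ : TVertex Δ 0 → Fin k)
    (hroot : σ (troot Δ 0) = c₁ ∨ σ (troot Δ 0) = c₂) : Zch c₁ c₂ σ = 1 := by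
  unfold Zch
  have hall : ∀ f : Fin 0 → Fin Δ, onChain c₁ c₂ σ (leafVertex f) := by
    intro f
    rw [leafVertex_zero]
    exact onChain_troot.mpr hroot
  rw [Nat.card_congr (Equiv.subtypeUnivEquiv hall)]
  simp [Nat.card_eq_fintype_card]

lemma Zch_eq_zero {ℓ : ℕ} (σ : TVertex Δ ℓ → Fin k)
    (hroot : ¬(σ (troot Δ ℓ) = c₁ ∨ σ (troot Δ ℓ) = c₂)) : Zch c₁ c₂ σ = 0 := by
  unfold Zch
  have : IsEmpty {f : Fin ℓ → Fin Δ // onChain c₁ c₂ σ (leafVertex f)} := by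
    refine ⟨fun f => hroot ?_⟩
    exact onChain_root_color f.2
  exact Nat.card_of_isEmpty

lemma Zch_succ {h : ℕ} (σ : TVertex Δ (h+1) → Fin k)
    (hroot : σ (troot Δ (h+1)) = c₁ ∨ σ (troot Δ (h+1)) = c₂) :
    Zch c₁ c₂ σ = ∑ j : Fin Δ, Zch c₁ c₂ (subC j σ) := by
  classical
  unfold Zch
  have e : {f : Fin (h+1) → Fin Δ // onChain c₁ c₂ σ (leafVertex f)} ≃
      (Σ j : Fin Δ, {g : Fin h → Fin Δ // onChain c₁ c₂ (subC j σ) (leafVertex g)}) := by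
    refine (Equiv.subtypeEquiv ((Fin.consEquiv (fun _ => Fin Δ)).symm) (fun f => ?_)).trans
      (Equiv.subtypeProdEquivSigmaSubtype
        (fun (j : Fin Δ) (g : Fin h → Fin Δ) => onChain c₁ c₂ (subC j σ) (leafVertex g)))
    show onChain c₁ c₂ σ (leafVertex f) ↔ onChain c₁ c₂ (subC (f 0) σ) (leafVertex (Fin.tail f))
    conv_lhs => rw [← Fin.cons_self_tail f, leafVertex_cons, onChain_emb]
    exact ⟨fun h => h.2, fun h => ⟨hroot, h⟩⟩
  rw [Nat.card_congr e]
  rw [Nat.card_eq_fintype_card, Fintype.card_sigma]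
  congr 1
  funext j
  rw [Nat.card_eq_fintype_card]

end ZSec

/-! ### Sums over colorings -/

section Sums

open Finset

lemma sum_indicator_card {α : Type*} [Fintype α] (S : Set α) (c : ℝ) :
    ∑ x : α, Set.indicator S (fun _ => c) x = (Nat.card S : ℝ) * c := by
  classical
  simp only [Set.indicator_apply]
  rw [Finset.sum_ite, Finset.sum_const, Finset.sum_const_zero, add_zero, nsmul_eq_mul]
  congr 2
  rw [Nat.card_eq_fintype_card, Fintype.card_subtype]

lemma sum_card_fiber {α : Type*} [Fintype α] {β : Type*} [Fintype β] (Q : α → Prop)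
    (g : α → β) :
    ∑ Y : β, (Nat.card {a : α // Q a ∧ g a = Y}) = Nat.card {a : α // Q a} := by
  classical
  simp only [Nat.card_eq_fintype_card, Fintype.card_subtype]
  rw [Finset.card_eq_sum_card_fiberwise (f := g) (t := univ) (fun x _ => mem_univ _)]
  congr 1
  funext b
  rw [Finset.filter_filter]

lemma exp_le_one_add_two_mul {x : ℝ} (h0 : 0 ≤ x) (h1 : x ≤ 1) :
    Real.exp x ≤ 1 + 2 * x := by
  have h := convexOn_exp.2 (Set.mem_univ (0:ℝ)) (Set.mem_univ (1:ℝ))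
    (by linarith : (0:ℝ) ≤ 1 - x) (by linarith : (0:ℝ) ≤ x) (by ring)
  simp only [smul_eq_mul, mul_zero, mul_one, zero_add, Real.exp_zero] at h
  have he : Real.exp 1 ≤ 3 := by
    have := Real.exp_one_lt_d9
    linarith
  nlinarith [Real.exp_pos (1:ℝ)]

end Sums

/-! ### The generating sums `G` and their recursion -/

section Gsec

open Finset

variable {k : ℕ}

/-- Sum of `exp(t · Z)` over proper colorings with given root color. -/
noncomputable def GG (Δ : ℕ) {k : ℕ} (c₁ c₂ : Fin k) (t : ℝ) (h : ℕ) (a : Fin k) : ℝ :=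
  ∑ σ : TVertex Δ h → Fin k,
    Set.indicator {σ | ProperColoring Δ h k σ ∧ σ (troot Δ h) = a}
      (fun σ => Real.exp (t * (Zch c₁ c₂ σ : ℝ))) σ

lemma GG_nonneg (Δ : ℕ) (c₁ c₂ : Fin k) (t : ℝ) (h : ℕ) (a : Fin k) :
    0 ≤ GG Δ c₁ c₂ t h a := by
  refine Finset.sum_nonneg fun σ _ => Set.indicator_nonneg (fun σ _ => ?_) σ
  exact le_of_lt (Real.exp_pos _)

lemma proper_zero (Δ : ℕ) (σ : TVertex Δ 0 → Fin k) : ProperColoring Δ 0 k σ :=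
  fun v h => absurd h (Nat.not_lt_zero _)

instance uniqueTV0 (Δ : ℕ) : Unique (TVertex Δ 0) :=
  ⟨⟨troot Δ 0⟩, fun v => depth_eq_zero_eq_troot v (Nat.lt_one_iff.mp v.1.isLt)⟩

lemma GG_zero_eval (Δ : ℕ) (c₁ c₂ : Fin k) (t : ℝ) (a : Fin k) :
    GG Δ c₁ c₂ t 0 a = Real.exp (t * (Zch c₁ c₂ (fun _ : TVertex Δ 0 => a) : ℝ)) := by
  classical
  unfold GG
  rw [← Equiv.sum_comp (Equiv.funUnique (TVertex Δ 0) (Fin k)).symm]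
  rw [Finset.sum_eq_single a]
  · rw [Set.indicator_of_mem]
    · rfl
    · exact ⟨proper_zero Δ _, rfl⟩
  · intro b _ hb
    refine Set.indicator_of_notMem (fun hmem => hb ?_) _
    exact hmem.2
  · intro ha
    exact absurd (mem_univ a) ha

lemma GG_zero_pair (Δ : ℕ) (c₁ c₂ : Fin k) (t : ℝ) (a : Fin k)
    (ha : a = c₁ ∨ a = c₂) : GG Δ c₁ c₂ t 0 a = Real.exp t := by
  rw [GG_zero_eval]
  rw [Zch_zero _ ha]
  norm_num

lemma GG_zero_t_zero (Δ : ℕ) (c₁ c₂ : Fin k) (h : ℕ) (a : Fin k) :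
    GG Δ c₁ c₂ 0 h a =
      ∑ σ : TVertex Δ h → Fin k,
        Set.indicator {σ | ProperColoring Δ h k σ ∧ σ (troot Δ h) = a}
          (fun _ => (1:ℝ)) σ := by
  unfold GG
  congr 1
  funext σ
  congr 1
  funext σ
  rw [zero_mul, Real.exp_zero]

lemma NN_eq_card (Δ : ℕ) (c₁ c₂ : Fin k) (h : ℕ) (a : Fin k) :
    GG Δ c₁ c₂ 0 h a =
      (Nat.card {σ : TVertex Δ h → Fin k //
        ProperColoring Δ h k σ ∧ σ (troot Δ h) = a} : ℝ) := by
  rw [GG_zero_t_zero, sum_indicator_card, mul_one]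
  rfl

end Gsec

section Grec

open Finset

variable {k : ℕ}

lemma sum_indicator_root_ne (Δ : ℕ) (c₁ c₂ : Fin k) (t : ℝ) (h : ℕ) (a : Fin k) :
    ∑ υ : TVertex Δ h → Fin k,
      Set.indicator {υ | ProperColoring Δ h k υ ∧ υ (troot Δ h) ≠ a}
        (fun υ => Real.exp (t * (Zch c₁ c₂ υ : ℝ))) υ
    = ∑ b ∈ Finset.univ.erase a, GG Δ c₁ c₂ t h b := by
  classical
  unfold GG
  rw [Finset.sum_comm]
  congr 1
  funext υ
  by_cases hP : ProperColoring Δ h k υ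
  · by_cases hr : υ (troot Δ h) = a
    · rw [Set.indicator_of_notMem (by simp [hr, hP])]
      refine (Finset.sum_eq_zero fun b hb => ?_).symm
      refine Set.indicator_of_notMem (fun hmem => ?_) _
      exact (Finset.ne_of_mem_erase hb) (hr ▸ hmem.2).symm
    · rw [Set.indicator_of_mem (by exact ⟨hP, hr⟩)]
      rw [Finset.sum_eq_single (υ (troot Δ h))]
      · rw [Set.indicator_of_mem (by exact ⟨hP, rfl⟩)]
      · intro b _ hb
        exact Set.indicator_of_notMem (fun hmem => hb hmem.2.symm) _
      · intro hmem
        exact absurd (Finset.mem_erase.mpr ⟨hr, mem_univ _⟩) hmem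
  · rw [Set.indicator_of_notMem (fun hmem => hP hmem.1)]
    refine (Finset.sum_eq_zero fun b _ => ?_).symm
    exact Set.indicator_of_notMem (fun hmem => hP hmem.1) _

lemma GG_succ (Δ : ℕ) (c₁ c₂ : Fin k) (t : ℝ) (h : ℕ) (a : Fin k)
    (hexp : ∀ τ : Fin Δ → TVertex Δ h → Fin k,
      Real.exp (t * (Zch c₁ c₂ (mrg a τ) : ℝ))
        = ∏ j : Fin Δ, Real.exp (t * (Zch c₁ c₂ (τ j) : ℝ))) :
    GG Δ c₁ c₂ t (h+1) a = (∑ b ∈ Finset.univ.erase a, GG Δ c₁ c₂ t h b) ^ Δ := by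
  classical
  unfold GG
  rw [← Equiv.sum_comp (splitE (Δ := Δ) (k := k) (h := h)).symm]
  have hsplit : ∀ x : Fin k × (Fin Δ → TVertex Δ h → Fin k),
      (splitE (Δ := Δ) (k := k) (h := h)).symm x = mrg x.1 x.2 := fun x => rfl
  rw [Fintype.sum_prod_type]
  rw [Finset.sum_eq_single a]
  · -- main term
    have hpt : ∀ τ : Fin Δ → TVertex Δ h → Fin k,
        Set.indicator {σ | ProperColoring Δ (h+1) k σ ∧ σ (troot Δ (h+1)) = a}
          (fun σ => Real.exp (t * (Zch c₁ c₂ σ : ℝ))) (mrg a τ)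
        = ∏ j : Fin Δ,
            Set.indicator {υ | ProperColoring Δ h k υ ∧ υ (troot Δ h) ≠ a}
              (fun υ => Real.exp (t * (Zch c₁ c₂ υ : ℝ))) (τ j) := by
      intro τ
      by_cases hc : ∀ j : Fin Δ, ProperColoring Δ h k (τ j) ∧ τ j (troot Δ h) ≠ a
      · have hP : ProperColoring Δ (h+1) k (mrg a τ) := by
          rw [proper_split]
          intro j
          rw [subC_mrg, mrg_troot]
          exact ⟨(hc j).2, (hc j).1⟩
        have hmem : mrg a τ ∈ {σ : TVertex Δ (h+1) → Fin k |
            ProperColoring Δ (h+1) k σ ∧ σ (troot Δ (h+1)) = a} := ⟨hP, mrg_troot a τ⟩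
        rw [Set.indicator_of_mem hmem]
        rw [hexp τ]
        refine Finset.prod_congr rfl fun j _ => ?_
        have hmemj : τ j ∈ {υ : TVertex Δ h → Fin k |
            ProperColoring Δ h k υ ∧ υ (troot Δ h) ≠ a} := ⟨(hc j).1, (hc j).2⟩
        exact (Set.indicator_of_mem hmemj (fun υ => Real.exp (t * (Zch c₁ c₂ υ : ℝ)))).symm
      · push_neg at hc
        obtain ⟨j0, hj0⟩ := hc
        have hnotP : mrg a τ ∉ {σ : TVertex Δ (h+1) → Fin k |
            ProperColoring Δ (h+1) k σ ∧ σ (troot Δ (h+1)) = a} := by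
          rintro ⟨hP, -⟩
          rw [proper_split] at hP
          have h2 := hP j0
          rw [subC_mrg, mrg_troot] at h2
          exact h2.1 (hj0 h2.2)
        rw [Set.indicator_of_notMem hnotP]
        refine (Finset.prod_eq_zero (mem_univ j0) ?_).symm
        refine Set.indicator_of_notMem (fun hmem => ?_) _
        exact hmem.2 (hj0 hmem.1)
    calc ∑ τ : Fin Δ → TVertex Δ h → Fin k,
          Set.indicator {σ | ProperColoring Δ (h+1) k σ ∧ σ (troot Δ (h+1)) = a}
            (fun σ => Real.exp (t * (Zch c₁ c₂ σ : ℝ)))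
            ((splitE (Δ := Δ) (k := k) (h := h)).symm (a, τ))
        = ∑ τ : Fin Δ → TVertex Δ h → Fin k, ∏ j : Fin Δ,
            Set.indicator {υ | ProperColoring Δ h k υ ∧ υ (troot Δ h) ≠ a}
              (fun υ => Real.exp (t * (Zch c₁ c₂ υ : ℝ))) (τ j) := by
          refine Finset.sum_congr rfl fun τ _ => ?_
          rw [hsplit]
          exact hpt τ
      _ = ∏ j : Fin Δ, ∑ υ : TVertex Δ h → Fin k,
            Set.indicator {υ | ProperColoring Δ h k υ ∧ υ (troot Δ h) ≠ a}
              (fun υ => Real.exp (t * (Zch c₁ c₂ υ : ℝ))) υ := by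
          rw [Finset.prod_univ_sum (fun _ => univ)]
          rw [Fintype.piFinset_univ]
      _ = (∑ b ∈ Finset.univ.erase a, GG Δ c₁ c₂ t h b) ^ Δ := by
          rw [sum_indicator_root_ne Δ c₁ c₂ t h a]
          rw [Finset.prod_const, Finset.card_univ, Fintype.card_fin]
  · -- other root colors contribute 0
    intro b _ hb
    refine Finset.sum_eq_zero fun τ _ => ?_
    rw [hsplit]
    refine Set.indicator_of_notMem (fun hmem => hb ?_) _
    have := hmem.2
    rwa [mrg_troot] at this
  · intro ha
    exact absurd (mem_univ a) ha

end Grec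

section Ginv

open Finset

variable {k : ℕ}

lemma proper_comp {Δ h : ℕ} (π : Equiv.Perm (Fin k)) (σ : TVertex Δ h → Fin k) :
    ProperColoring Δ h k (π ∘ σ) ↔ ProperColoring Δ h k σ := by
  unfold ProperColoring
  refine forall_congr' fun v => forall_congr' fun hv => forall_congr' fun j => ?_
  simp only [Function.comp_apply, ne_eq, EmbeddingLike.apply_eq_iff_eq]

lemma Zch_swap {Δ h : ℕ} (c₁ c₂ : Fin k) (σ : TVertex Δ h → Fin k) :
    Zch c₁ c₂ (Equiv.swap c₁ c₂ ∘ σ) = Zch c₁ c₂ σ := by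
  unfold Zch
  refine Nat.card_congr (Equiv.subtypeEquivRight fun f => ?_)
  unfold onChain
  exact forall_congr' fun i => forall_congr' fun hi => pair_swap_iff _

lemma GG_comp (Δ : ℕ) (c₁ c₂ : Fin k) (t : ℝ) (h : ℕ) (a b : Fin k)
    (π : Equiv.Perm (Fin k)) (hab : π a = b)
    (hZ : ∀ σ : TVertex Δ h → Fin k,
      Real.exp (t * (Zch c₁ c₂ (π ∘ σ) : ℝ)) = Real.exp (t * (Zch c₁ c₂ σ : ℝ))) :
    GG Δ c₁ c₂ t h b = GG Δ c₁ c₂ t h a := by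
  classical
  unfold GG
  rw [← Equiv.sum_comp (Equiv.arrowCongr (Equiv.refl (TVertex Δ h)) π)]
  refine Finset.sum_congr rfl fun σ _ => ?_
  have he : (Equiv.arrowCongr (Equiv.refl (TVertex Δ h)) π) σ = π ∘ σ := rfl
  rw [he]
  by_cases hσ : ProperColoring Δ h k σ ∧ σ (troot Δ h) = a
  · have h1 : π ∘ σ ∈ {σ : TVertex Δ h → Fin k |
        ProperColoring Δ h k σ ∧ σ (troot Δ h) = b} := by
      refine ⟨(proper_comp π σ).mpr hσ.1, ?_⟩
      show π (σ (troot Δ h)) = b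
      rw [hσ.2, hab]
    have h2 : σ ∈ {σ : TVertex Δ h → Fin k |
        ProperColoring Δ h k σ ∧ σ (troot Δ h) = a} := hσ
    rw [Set.indicator_of_mem h1, Set.indicator_of_mem h2]
    exact hZ σ
  · have h1 : π ∘ σ ∉ {σ : TVertex Δ h → Fin k |
        ProperColoring Δ h k σ ∧ σ (troot Δ h) = b} := by
      rintro ⟨hp, hr⟩
      apply hσ
      refine ⟨(proper_comp π σ).mp hp, ?_⟩
      have : π (σ (troot Δ h)) = π a := by rw [hab]; exact hr
      exact π.injective this
    have h2 : σ ∉ {σ : TVertex Δ h → Fin k |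
        ProperColoring Δ h k σ ∧ σ (troot Δ h) = a} := hσ
    rw [Set.indicator_of_notMem h1, Set.indicator_of_notMem h2]

lemma GG_c2 (Δ : ℕ) (c₁ c₂ : Fin k) (t : ℝ) (h : ℕ) :
    GG Δ c₁ c₂ t h c₂ = GG Δ c₁ c₂ t h c₁ := by
  refine GG_comp Δ c₁ c₂ t h c₁ c₂ (Equiv.swap c₁ c₂) (Equiv.swap_apply_left c₁ c₂)
    fun σ => ?_
  rw [Zch_swap]

lemma NN_indep (Δ : ℕ) (c₁ c₂ : Fin k) (h : ℕ) (a b : Fin k) :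
    GG Δ c₁ c₂ 0 h b = GG Δ c₁ c₂ 0 h a := by
  refine GG_comp Δ c₁ c₂ 0 h a b (Equiv.swap a b) (Equiv.swap_apply_left a b) fun σ => ?_
  simp

lemma GG_notin (Δ : ℕ) (c₁ c₂ : Fin k) (t : ℝ) (h : ℕ) (a : Fin k)
    (ha : ¬(a = c₁ ∨ a = c₂)) : GG Δ c₁ c₂ t h a = GG Δ c₁ c₂ 0 h a := by
  unfold GG
  refine Finset.sum_congr rfl fun σ _ => ?_
  refine congrFun (Set.indicator_congr fun σ' hσ' => ?_) σ
  have hz : Zch c₁ c₂ σ' = 0 := by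
    refine Zch_eq_zero σ' ?_
    rw [hσ'.2]
    exact ha
  rw [hz]
  norm_num

lemma two_le_k {c₁ c₂ : Fin k} (hne : c₁ ≠ c₂) : 2 ≤ k := by
  by_contra hk
  push_neg at hk
  interval_cases k
  · exact c₁.elim0
  · exact hne (Subsingleton.elim c₁ c₂)

lemma Gg_rec (Δ : ℕ) (c₁ c₂ : Fin k) (hne : c₁ ≠ c₂) (t : ℝ) (h : ℕ) :
    GG Δ c₁ c₂ t (h+1) c₁
      = (GG Δ c₁ c₂ t h c₁ + ((k:ℝ) - 2) * GG Δ c₁ c₂ 0 h c₁) ^ Δ := by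
  classical
  rw [GG_succ Δ c₁ c₂ t h c₁ ?hexp]
  case hexp =>
    intro τ
    have hroot : mrg c₁ τ (troot Δ (h+1)) = c₁ ∨ mrg c₁ τ (troot Δ (h+1)) = c₂ :=
      Or.inl (mrg_troot c₁ τ)
    rw [Zch_succ (mrg c₁ τ) hroot]
    have : ∀ j : Fin Δ, Zch c₁ c₂ (subC j (mrg c₁ τ)) = Zch c₁ c₂ (τ j) := by
      intro j; rw [subC_mrg]
    rw [Finset.sum_congr rfl (fun j _ => this j)]
    rw [Nat.cast_sum, Finset.mul_sum, Real.exp_sum]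
  congr 1
  have hc2 : c₂ ∈ Finset.univ.erase c₁ := Finset.mem_erase.mpr ⟨hne.symm, mem_univ _⟩
  rw [← Finset.add_sum_erase _ _ hc2]
  rw [GG_c2]
  congr 1
  have hrest : ∀ b ∈ (Finset.univ.erase c₁).erase c₂,
      GG Δ c₁ c₂ t h b = GG Δ c₁ c₂ 0 h c₁ := by
    intro b hb
    have hb2 := Finset.ne_of_mem_erase hb
    have hb1 := Finset.ne_of_mem_erase (Finset.mem_of_mem_erase hb)
    rw [GG_notin Δ c₁ c₂ t h b (by tauto), NN_indep Δ c₁ c₂ h c₁ b]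
  rw [Finset.sum_congr rfl hrest, Finset.sum_const, nsmul_eq_mul]
  congr 1
  rw [Finset.card_erase_of_mem hc2, Finset.card_erase_of_mem (mem_univ _), Finset.card_univ,
    Fintype.card_fin]
  have h2k : 2 ≤ k := two_le_k hne
  rw [Nat.cast_sub (by omega), Nat.cast_sub (by omega)]
  push_cast
  ring

lemma NN_rec (Δ : ℕ) (c₁ c₂ : Fin k) (hne : c₁ ≠ c₂) (h : ℕ) :
    GG Δ c₁ c₂ 0 (h+1) c₁ = (((k:ℝ) - 1) * GG Δ c₁ c₂ 0 h c₁) ^ Δ := by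
  classical
  rw [GG_succ Δ c₁ c₂ 0 h c₁ (by intro τ; simp)]
  congr 1
  have hrest : ∀ b ∈ Finset.univ.erase c₁, GG Δ c₁ c₂ 0 h b = GG Δ c₁ c₂ 0 h c₁ :=
    fun b _ => NN_indep Δ c₁ c₂ h c₁ b
  rw [Finset.sum_congr rfl hrest, Finset.sum_const, nsmul_eq_mul]
  congr 1
  rw [Finset.card_erase_of_mem (mem_univ _), Finset.card_univ, Fintype.card_fin]
  have h1k : 1 ≤ k := by
    rcases Nat.eq_zero_or_pos k with h0 | h1
    · subst h0; exact c₁.elim0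
    · exact h1
  rw [Nat.cast_sub h1k]
  norm_num

/-- A proper coloring alternating between `a` and `b` by depth parity. -/
def parC (Δ h : ℕ) (a b : Fin k) : TVertex Δ h → Fin k :=
  fun v => if Even v.1.val then a else b

lemma parC_proper (Δ h : ℕ) (a b : Fin k) (hab : a ≠ b) :
    ProperColoring Δ h k (parC Δ h a b) := by
  intro v hv j
  unfold parC
  have hd : (tchild v hv j).1.val = v.1.val + 1 := rfl
  rw [hd]
  by_cases he : Even v.1.val
  · rw [if_pos he, if_neg (by rw [Nat.even_add_one]; exact not_not.mpr he)]
    exact hab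
  · rw [if_neg he, if_pos (by rw [Nat.even_add_one]; exact he)]
    exact hab.symm

lemma NN_pos (Δ : ℕ) (c₁ c₂ : Fin k) (hne : c₁ ≠ c₂) (h : ℕ) :
    0 < GG Δ c₁ c₂ 0 h c₁ := by
  rw [NN_eq_card]
  have : Nonempty {σ : TVertex Δ h → Fin k //
      ProperColoring Δ h k σ ∧ σ (troot Δ h) = c₁} := by
    refine ⟨parC Δ h c₁ c₂, parC_proper Δ h c₁ c₂ hne, ?_⟩
    unfold parC
    rw [if_pos]
    exact Even.zero
  exact_mod_cast Nat.card_pos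

end Ginv

section Analytic

open Finset

variable {k : ℕ}

set_option maxHeartbeats 1000000 in
lemma F_bound (Δ : ℕ) (c₁ c₂ : Fin k) (hne : c₁ ≠ c₂) (t r : ℝ) (ht : 0 ≤ t) (hr : 1 ≤ r)
    (hm : 2 * (Δ : ℝ) ≤ (r - 1) * ((k:ℝ) - 1)) :
    ∀ h : ℕ, t * r ^ h ≤ 1 →
      GG Δ c₁ c₂ t h c₁ ≤ Real.exp (t * r ^ h) * GG Δ c₁ c₂ 0 h c₁ := by
  have hk2 : (2:ℝ) ≤ (k:ℝ) := by exact_mod_cast two_le_k hne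
  have hk1 : (0:ℝ) < (k:ℝ) - 1 := by linarith
  intro h
  induction h with
  | zero =>
    intro h0
    rw [GG_zero_pair Δ c₁ c₂ t c₁ (Or.inl rfl), GG_zero_pair Δ c₁ c₂ 0 c₁ (Or.inl rfl)]
    rw [Real.exp_zero, mul_one, pow_zero, mul_one]
  | succ h ih =>
    intro hth
    have hrp : (0:ℝ) < r ^ h := pow_pos (by linarith) h
    have hrh1 : r ^ h ≤ r ^ (h+1) := pow_le_pow_right₀ hr (Nat.le_succ h)
    have hth' : t * r ^ h ≤ 1 := le_trans (by nlinarith) hth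
    have hx0 : 0 ≤ t * r ^ h := mul_nonneg ht (le_of_lt hrp)
    have hN : 0 < GG Δ c₁ c₂ 0 h c₁ := NN_pos Δ c₁ c₂ hne h
    have hG : GG Δ c₁ c₂ t h c₁ ≤ (1 + 2 * (t * r ^ h)) * GG Δ c₁ c₂ 0 h c₁ := by
      calc GG Δ c₁ c₂ t h c₁ ≤ Real.exp (t * r ^ h) * GG Δ c₁ c₂ 0 h c₁ := ih hth'
        _ ≤ (1 + 2 * (t * r ^ h)) * GG Δ c₁ c₂ 0 h c₁ := by
            have := exp_le_one_add_two_mul hx0 hth'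
            exact mul_le_mul_of_nonneg_right this (le_of_lt hN)
    rw [Gg_rec Δ c₁ c₂ hne t h, NN_rec Δ c₁ c₂ hne h]
    set N := GG Δ c₁ c₂ 0 h c₁ with hNdef
    have hbase : GG Δ c₁ c₂ t h c₁ + ((k:ℝ) - 2) * N
        ≤ (((k:ℝ) - 1) + 2 * (t * r ^ h)) * N := by nlinarith
    have hbase0 : 0 ≤ GG Δ c₁ c₂ t h c₁ + ((k:ℝ) - 2) * N := by
      have := GG_nonneg Δ c₁ c₂ t h c₁
      nlinarith
    have hstep1 : (GG Δ c₁ c₂ t h c₁ + ((k:ℝ) - 2) * N) ^ Δ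
        ≤ ((((k:ℝ) - 1) + 2 * (t * r ^ h)) * N) ^ Δ :=
      pow_le_pow_left₀ hbase0 hbase Δ
    refine le_trans hstep1 ?_
    set x : ℝ := 2 * (t * r ^ h) / ((k:ℝ) - 1) with hxdef
    have hx : 0 ≤ x := by positivity
    have hkx : ((k:ℝ) - 1) * x = 2 * (t * r ^ h) := by
      rw [hxdef, mul_comm, div_mul_cancel₀ _ (ne_of_gt hk1)]
    have hfac : (((k:ℝ) - 1) + 2 * (t * r ^ h)) = ((k:ℝ) - 1) * (1 + x) := by
      rw [mul_add, mul_one, hkx]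
    have hfacle : ((k:ℝ) - 1) * (1 + x) ≤ ((k:ℝ) - 1) * Real.exp x :=
      mul_le_mul_of_nonneg_left (by linarith [Real.add_one_le_exp x]) (by linarith)
    have hbase2 : (((k:ℝ) - 1) + 2 * (t * r ^ h)) * N ≤ (((k:ℝ) - 1) * Real.exp x) * N := by
      rw [hfac]
      exact mul_le_mul_of_nonneg_right hfacle (le_of_lt hN)
    have hbase20 : 0 ≤ (((k:ℝ) - 1) + 2 * (t * r ^ h)) * N := by nlinarith
    refine le_trans (pow_le_pow_left₀ hbase20 hbase2 Δ) ?_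
    have hre : (((k:ℝ) - 1) * Real.exp x) * N = Real.exp x * (((k:ℝ) - 1) * N) := by ring
    rw [hre, mul_pow]
    refine mul_le_mul_of_nonneg_right ?_
      (pow_nonneg (mul_nonneg (by linarith) (le_of_lt hN)) Δ)
    rw [← Real.exp_nat_mul]
    rw [Real.exp_le_exp]
    have hΔx : (Δ:ℝ) * x = t * r ^ h * (2 * (Δ:ℝ) / ((k:ℝ) - 1)) := by
      rw [hxdef]; ring
    rw [hΔx]
    have h2m : 2 * (Δ:ℝ) / ((k:ℝ) - 1) ≤ r - 1 := by
      rw [div_le_iff₀ hk1]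
      linarith
    calc t * r ^ h * (2 * (Δ:ℝ) / ((k:ℝ) - 1)) ≤ t * r ^ h * (r - 1) := by
          exact mul_le_mul_of_nonneg_left h2m hx0
      _ ≤ t * r ^ (h+1) := by
          have : r ^ (h+1) = r ^ h * r := pow_succ r h
          nlinarith

lemma chernoff (Δ : ℕ) (c₁ c₂ : Fin k) (t A : ℝ) (ht : 0 ≤ t) (ℓ : ℕ) :
    (Nat.card {σ : TVertex Δ ℓ → Fin k //
        (ProperColoring Δ ℓ k σ ∧ σ (troot Δ ℓ) = c₁) ∧ A < (Zch c₁ c₂ σ : ℝ)} : ℝ)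
      * Real.exp (t * A) ≤ GG Δ c₁ c₂ t ℓ c₁ := by
  classical
  refine le_trans (le_of_eq (sum_indicator_card
    {σ : TVertex Δ ℓ → Fin k |
      (ProperColoring Δ ℓ k σ ∧ σ (troot Δ ℓ) = c₁) ∧ A < (Zch c₁ c₂ σ : ℝ)}
    (Real.exp (t * A))).symm) ?_
  unfold GG
  refine Finset.sum_le_sum fun σ _ => ?_
  by_cases hσ : (ProperColoring Δ ℓ k σ ∧ σ (troot Δ ℓ) = c₁) ∧ A < (Zch c₁ c₂ σ : ℝ)
  · have h1 : σ ∈ {σ : TVertex Δ ℓ → Fin k |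
        (ProperColoring Δ ℓ k σ ∧ σ (troot Δ ℓ) = c₁) ∧ A < (Zch c₁ c₂ σ : ℝ)} := hσ
    have h2 : σ ∈ {σ : TVertex Δ ℓ → Fin k |
        ProperColoring Δ ℓ k σ ∧ σ (troot Δ ℓ) = c₁} := hσ.1
    rw [Set.indicator_of_mem h1, Set.indicator_of_mem h2]
    rw [Real.exp_le_exp]
    exact mul_le_mul_of_nonneg_left (le_of_lt hσ.2) ht
  · have h1 : σ ∉ {σ : TVertex Δ ℓ → Fin k |
        (ProperColoring Δ ℓ k σ ∧ σ (troot Δ ℓ) = c₁) ∧ A < (Zch c₁ c₂ σ : ℝ)} := hσ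
    rw [Set.indicator_of_notMem h1]
    exact Set.indicator_nonneg (fun _ _ => le_of_lt (Real.exp_pos _)) σ

end Analytic

/-! ### The Kempe coupling -/

section Coupling

open Finset

variable {Δ ℓ k : ℕ} {c₁ c₂ : Fin k}

lemma ham_eq_Zch (hne : c₁ ≠ c₂) (σ : TVertex Δ ℓ → Fin k) :
    leafHamming (leafColoring σ) (leafColoring (kem c₁ c₂ σ)) = Zch c₁ c₂ σ := by
  unfold leafHamming Zch
  refine Nat.card_congr (Equiv.subtypeEquivRight fun f => ?_)
  show leafColoring σ f ≠ leafColoring (kem c₁ c₂ σ) f ↔ onChain c₁ c₂ σ (leafVertex f)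
  rw [← kem_ne_iff hne σ (leafVertex f)]
  exact ne_comm

lemma sum_card_fiber_ind {α β : Type*} [Fintype α] [Fintype β] (Q : α → Prop) (g : α → β)
    (R : β → Prop) :
    ∑ b : β, Set.indicator {b : β | R b}
        (fun b => ((Nat.card {a : α // Q a ∧ g a = b} : ℕ) : ℝ)) b
      = (Nat.card {a : α // Q a ∧ R (g a)} : ℝ) := by
  classical
  have hpt : ∀ b : β, Set.indicator {b : β | R b}
        (fun b => ((Nat.card {a : α // Q a ∧ g a = b} : ℕ) : ℝ)) b
      = ((Nat.card {a : α // (Q a ∧ R (g a)) ∧ g a = b} : ℕ) : ℝ) := by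
    intro b
    by_cases hR : b ∈ {b : β | R b}
    · rw [Set.indicator_of_mem hR]
      congr 1
      refine Nat.card_congr (Equiv.subtypeEquivRight fun a => ?_)
      constructor
      · rintro ⟨hQ, hg⟩
        exact ⟨⟨hQ, hg ▸ hR⟩, hg⟩
      · rintro ⟨⟨hQ, _⟩, hg⟩
        exact ⟨hQ, hg⟩
    · rw [Set.indicator_of_notMem hR]
      symm
      norm_cast
      have : IsEmpty {a : α // (Q a ∧ R (g a)) ∧ g a = b} :=
        ⟨fun a => hR (a.2.2 ▸ a.2.1.2)⟩
      exact Nat.card_of_isEmpty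
  rw [Finset.sum_congr rfl (fun b _ => hpt b), ← Nat.cast_sum]
  exact_mod_cast congrArg (Nat.cast (R := ℝ))
    (sum_card_fiber (fun a : α => Q a ∧ R (g a)) g)

lemma card_root_swap (hne : c₁ ≠ c₂) (Y : (Fin ℓ → Fin Δ) → Fin k) :
    Nat.card {σ : TVertex Δ ℓ → Fin k // ProperColoring Δ ℓ k σ ∧ σ (troot Δ ℓ) = c₁ ∧
        leafColoring (kem c₁ c₂ σ) = Y}
      = Nat.card {σ : TVertex Δ ℓ → Fin k // ProperColoring Δ ℓ k σ ∧ σ (troot Δ ℓ) = c₂ ∧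
        leafColoring σ = Y} := by
  refine Nat.card_congr ⟨fun σ => ⟨kem c₁ c₂ σ.1, ?_, ?_, σ.2.2.2⟩,
    fun τ => ⟨kem c₁ c₂ τ.1, ?_, ?_, ?_⟩, fun σ => Subtype.ext (kem_kem σ.1),
    fun τ => Subtype.ext (kem_kem τ.1)⟩
  · exact kem_proper σ.2.1
  · rw [kem_troot (Or.inl σ.2.2.1), σ.2.2.1, Equiv.swap_apply_left]
  · exact kem_proper τ.2.1
  · rw [kem_troot (Or.inr τ.2.2.1), τ.2.2.1, Equiv.swap_apply_right]
  · rw [kem_kem]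
    exact τ.2.2.2

lemma card_den_swap (hne : c₁ ≠ c₂) :
    Nat.card {σ : TVertex Δ ℓ → Fin k // ProperColoring Δ ℓ k σ ∧ σ (troot Δ ℓ) = c₁}
      = Nat.card {σ : TVertex Δ ℓ → Fin k //
          ProperColoring Δ ℓ k σ ∧ σ (troot Δ ℓ) = c₂} := by
  refine Nat.card_congr ⟨fun σ => ⟨kem c₁ c₂ σ.1, kem_proper σ.2.1, ?_⟩,
    fun τ => ⟨kem c₁ c₂ τ.1, kem_proper τ.2.1, ?_⟩, fun σ => Subtype.ext (kem_kem σ.1),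
    fun τ => Subtype.ext (kem_kem τ.1)⟩
  · rw [kem_troot (Or.inl σ.2.2), σ.2.2, Equiv.swap_apply_left]
  · rw [kem_troot (Or.inr τ.2.2), τ.2.2, Equiv.swap_apply_right]

/-- The Kempe coupling of `μ↓_{c₁}` and `μ↓_{c₂}`. -/
noncomputable def kemCoupling (Δ ℓ k : ℕ) (c₁ c₂ : Fin k)
    (q : ((Fin ℓ → Fin Δ) → Fin k) × ((Fin ℓ → Fin Δ) → Fin k)) : ℝ :=
  (Nat.card {σ : TVertex Δ ℓ → Fin k // ProperColoring Δ ℓ k σ ∧ σ (troot Δ ℓ) = c₁ ∧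
      leafColoring σ = q.1 ∧ leafColoring (kem c₁ c₂ σ) = q.2} : ℝ) /
    (Nat.card {σ : TVertex Δ ℓ → Fin k //
      ProperColoring Δ ℓ k σ ∧ σ (troot Δ ℓ) = c₁} : ℝ)

lemma kemCoupling_isCoupling (hne : c₁ ≠ c₂) :
    IsCoupling (kemCoupling Δ ℓ k c₁ c₂) (downDist Δ ℓ k c₁) (downDist Δ ℓ k c₂) := by
  classical
  refine ⟨fun q => ?_, fun X => ?_, fun Y => ?_⟩
  · exact div_nonneg (Nat.cast_nonneg _) (Nat.cast_nonneg _)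
  · unfold kemCoupling downDist
    rw [← Finset.sum_div]
    congr 1
    have hq : ∀ Y : (Fin ℓ → Fin Δ) → Fin k,
        (Nat.card {σ : TVertex Δ ℓ → Fin k // ProperColoring Δ ℓ k σ ∧ σ (troot Δ ℓ) = c₁ ∧
          leafColoring σ = X ∧ leafColoring (kem c₁ c₂ σ) = Y} : ℝ)
        = ((Nat.card {σ : TVertex Δ ℓ → Fin k //
            (ProperColoring Δ ℓ k σ ∧ σ (troot Δ ℓ) = c₁ ∧ leafColoring σ = X) ∧
            (fun σ => leafColoring (kem c₁ c₂ σ)) σ = Y} : ℕ) : ℝ) := by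
      intro Y
      congr 1
      exact Nat.card_congr (Equiv.subtypeEquivRight fun σ => by tauto)
    rw [Finset.sum_congr rfl (fun Y _ => hq Y), ← Nat.cast_sum]
    rw [sum_card_fiber
      (fun σ : TVertex Δ ℓ → Fin k =>
        ProperColoring Δ ℓ k σ ∧ σ (troot Δ ℓ) = c₁ ∧ leafColoring σ = X)
      (fun σ => leafColoring (kem c₁ c₂ σ))]
  · unfold kemCoupling downDist
    rw [← Finset.sum_div]
    have hq : ∀ X : (Fin ℓ → Fin Δ) → Fin k,
        (Nat.card {σ : TVertex Δ ℓ → Fin k // ProperColoring Δ ℓ k σ ∧ σ (troot Δ ℓ) = c₁ ∧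
          leafColoring σ = X ∧ leafColoring (kem c₁ c₂ σ) = Y} : ℝ)
        = ((Nat.card {σ : TVertex Δ ℓ → Fin k //
            (ProperColoring Δ ℓ k σ ∧ σ (troot Δ ℓ) = c₁ ∧
              leafColoring (kem c₁ c₂ σ) = Y) ∧
            (fun σ => leafColoring σ) σ = X} : ℕ) : ℝ) := by
      intro X
      congr 1
      exact Nat.card_congr (Equiv.subtypeEquivRight fun σ => by tauto)
    rw [Finset.sum_congr rfl (fun X _ => hq X), ← Nat.cast_sum]
    rw [sum_card_fiber
      (fun σ : TVertex Δ ℓ → Fin k =>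
        ProperColoring Δ ℓ k σ ∧ σ (troot Δ ℓ) = c₁ ∧ leafColoring (kem c₁ c₂ σ) = Y)
      (fun σ => leafColoring σ)]
    rw [card_root_swap hne Y, card_den_swap hne]

lemma kemCoupling_tail (hne : c₁ ≠ c₂) (A : ℝ) :
    (∑ q : ((Fin ℓ → Fin Δ) → Fin k) × ((Fin ℓ → Fin Δ) → Fin k),
      Set.indicator {q : ((Fin ℓ → Fin Δ) → Fin k) × ((Fin ℓ → Fin Δ) → Fin k) |
          A < (leafHamming q.1 q.2 : ℝ)} (kemCoupling Δ ℓ k c₁ c₂) q)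
      = (Nat.card {σ : TVertex Δ ℓ → Fin k //
          (ProperColoring Δ ℓ k σ ∧ σ (troot Δ ℓ) = c₁) ∧ A < (Zch c₁ c₂ σ : ℝ)} : ℝ) /
        (Nat.card {σ : TVertex Δ ℓ → Fin k //
          ProperColoring Δ ℓ k σ ∧ σ (troot Δ ℓ) = c₁} : ℝ) := by
  classical
  have hpt : ∀ q : ((Fin ℓ → Fin Δ) → Fin k) × ((Fin ℓ → Fin Δ) → Fin k),
      Set.indicator {q : ((Fin ℓ → Fin Δ) → Fin k) × ((Fin ℓ → Fin Δ) → Fin k) |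
          A < (leafHamming q.1 q.2 : ℝ)} (kemCoupling Δ ℓ k c₁ c₂) q
      = Set.indicator {q : ((Fin ℓ → Fin Δ) → Fin k) × ((Fin ℓ → Fin Δ) → Fin k) |
          A < (leafHamming q.1 q.2 : ℝ)}
          (fun q => ((Nat.card {σ : TVertex Δ ℓ → Fin k //
            (ProperColoring Δ ℓ k σ ∧ σ (troot Δ ℓ) = c₁) ∧
            (fun σ => (leafColoring σ, leafColoring (kem c₁ c₂ σ))) σ = q} : ℕ) : ℝ)) q /
        (Nat.card {σ : TVertex Δ ℓ → Fin k //
          ProperColoring Δ ℓ k σ ∧ σ (troot Δ ℓ) = c₁} : ℝ) := by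
    intro q
    by_cases hR : q ∈ {q : ((Fin ℓ → Fin Δ) → Fin k) × ((Fin ℓ → Fin Δ) → Fin k) |
        A < (leafHamming q.1 q.2 : ℝ)}
    · rw [Set.indicator_of_mem hR, Set.indicator_of_mem hR]
      unfold kemCoupling
      congr 2
      refine Nat.card_congr (Equiv.subtypeEquivRight fun σ => ?_)
      rw [Prod.ext_iff]
      show _ ↔ _ ∧ leafColoring σ = q.1 ∧ leafColoring (kem c₁ c₂ σ) = q.2
      tauto
    · rw [Set.indicator_of_notMem hR, Set.indicator_of_notMem hR, zero_div]
  rw [Finset.sum_congr rfl (fun q _ => hpt q), ← Finset.sum_div]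
  congr 1
  rw [sum_card_fiber_ind
    (fun σ : TVertex Δ ℓ → Fin k => ProperColoring Δ ℓ k σ ∧ σ (troot Δ ℓ) = c₁)
    (fun σ => (leafColoring σ, leafColoring (kem c₁ c₂ σ)))
    (fun q => A < (leafHamming q.1 q.2 : ℝ))]
  congr 1
  refine Nat.card_congr (Equiv.subtypeEquivRight fun σ => ?_)
  show _ ∧ A < ((leafHamming (leafColoring σ) (leafColoring (kem c₁ c₂ σ)) : ℕ) : ℝ) ↔ _
  rw [ham_eq_Zch hne σ]

end Coupling

set_option maxHeartbeats 1000000 in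
/-- Lemma 19 of the paper: a coupling of `μ↓_{c₁,ℓ}` and `μ↓_{c₂,ℓ}`
in which the Hamming distance at the leaves exceeds `Δ^{εℓ/8}` with probability at most
`e^{-Δ^{εℓ/10}}`. -/
theorem downward_coupling_tail (C : ℝ) (hC : 1 < C) (ε : ℝ)
    (hε : ε = min (C - 1) (1 / 3)) :
    ∃ Δ₀ ℓ₀ : ℕ, ∀ Δ : ℕ, Δ₀ < Δ → ∀ k : ℕ, C * Δ / Real.log Δ < (k : ℝ) →
      ∀ ℓ : ℕ, ℓ₀ < ℓ → ∀ c₁ c₂ : Fin k, c₁ ≠ c₂ →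
        ∃ ν : ((Fin ℓ → Fin Δ) → Fin k) × ((Fin ℓ → Fin Δ) → Fin k) → ℝ,
          IsCoupling ν (downDist Δ ℓ k c₁) (downDist Δ ℓ k c₂) ∧
          (∑ q : ((Fin ℓ → Fin Δ) → Fin k) × ((Fin ℓ → Fin Δ) → Fin k),
            Set.indicator {q : ((Fin ℓ → Fin Δ) → Fin k) × ((Fin ℓ → Fin Δ) → Fin k) |
                (Δ : ℝ) ^ (ε * (ℓ : ℝ) / 8) < (leafHamming q.1 q.2 : ℝ)} ν q) ≤
            Real.exp (-(Δ : ℝ) ^ (ε * (ℓ : ℝ) / 10)) := by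
  have hε0 : 0 < ε := by
    rw [hε]
    exact lt_min (by linarith) (by norm_num)
  have hlo := (isLittleO_log_rpow_atTop (r := ε/200) (by positivity)).def
    (by norm_num : (0:ℝ) < 1/5)
  rw [Filter.eventually_atTop] at hlo
  obtain ⟨x₀, hx₀⟩ := hlo
  refine ⟨max 16 (⌈x₀⌉₊ + 1), ⌈(50:ℝ)/ε⌉₊, ?_⟩
  intro Δ hΔ k hk ℓ hℓ c₁ c₂ hne
  -- basic quantities
  have hΔ16 : 16 ≤ Δ := le_of_lt (lt_of_le_of_lt (le_max_left _ _) hΔ)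
  have hΔR : (16:ℝ) ≤ (Δ:ℝ) := by exact_mod_cast hΔ16
  have hΔ0 : (0:ℝ) < (Δ:ℝ) := by linarith
  have hΔx₀ : x₀ ≤ (Δ:ℝ) := by
    have h1 : x₀ ≤ (⌈x₀⌉₊ : ℝ) := Nat.le_ceil x₀
    have h2 : (⌈x₀⌉₊ + 1 : ℕ) ≤ Δ := le_of_lt (lt_of_le_of_lt (le_max_right _ _) hΔ)
    have h3 : ((⌈x₀⌉₊ + 1 : ℕ) : ℝ) ≤ (Δ:ℝ) := by exact_mod_cast h2
    push_cast at h3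
    linarith
  have hlog := hx₀ (Δ:ℝ) hΔx₀
  have hrpow_pos : 0 < (Δ:ℝ)^(ε/200) := Real.rpow_pos_of_pos hΔ0 _
  have hlogpos : 0 < Real.log (Δ:ℝ) := Real.log_pos (by linarith)
  have hlog5 : 5 * Real.log (Δ:ℝ) ≤ (Δ:ℝ)^(ε/200) := by
    rw [Real.norm_eq_abs, Real.norm_eq_abs, abs_of_pos hlogpos, abs_of_pos hrpow_pos] at hlog
    linarith
  have hlog1 : 1 ≤ Real.log (Δ:ℝ) := by
    rw [Real.le_log_iff_exp_le hΔ0]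
    have := Real.exp_one_lt_d9
    linarith
  have hs := Real.sq_sqrt (le_of_lt hΔ0)
  have hsnn := Real.sqrt_nonneg (Δ:ℝ)
  have hs4 : 4 ≤ Real.sqrt (Δ:ℝ) := by nlinarith [hs, hsnn]
  have hlogsqrt : Real.log (Δ:ℝ) = 2 * Real.log (Real.sqrt (Δ:ℝ)) := by
    rw [Real.log_sqrt (le_of_lt hΔ0)]
    ring
  have hlogs : Real.log (Real.sqrt (Δ:ℝ)) ≤ Real.sqrt (Δ:ℝ) - 1 :=
    Real.log_le_sub_one_of_pos (by nlinarith)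
  have h2log : 2 * Real.log (Δ:ℝ) ≤ (Δ:ℝ) := by nlinarith
  -- bounds on k
  have hkk : (Δ:ℝ)/Real.log (Δ:ℝ) < (k:ℝ) := by
    refine lt_of_le_of_lt ?_ hk
    rw [div_le_div_iff₀ hlogpos hlogpos]
    nlinarith [mul_pos hΔ0 hlogpos]
  have hu1 : 1 ≤ (Δ:ℝ)/(2*Real.log (Δ:ℝ)) := by
    rw [le_div_iff₀ (by positivity)]
    linarith
  have hk1 : (Δ:ℝ)/(2*Real.log (Δ:ℝ)) ≤ (k:ℝ) - 1 := by
    have h2u : (Δ:ℝ)/Real.log (Δ:ℝ) = 2*((Δ:ℝ)/(2*Real.log (Δ:ℝ))) := by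
      field_simp
    nlinarith [hkk, hu1]
  have hk1pos : 0 < (k:ℝ) - 1 := lt_of_lt_of_le (by linarith) hk1
  set r : ℝ := 2*(Δ:ℝ)/((k:ℝ)-1) + 1 with hrdef
  have hr1 : 1 ≤ r := by
    rw [hrdef]
    have : 0 ≤ 2*(Δ:ℝ)/((k:ℝ)-1) := by positivity
    linarith
  have hrpos : 0 < r := by linarith
  have hrlog : r ≤ 5 * Real.log (Δ:ℝ) := by
    have hfrac : 2*(Δ:ℝ)/((k:ℝ)-1) ≤ 4 * Real.log (Δ:ℝ) := by
      rw [div_le_iff₀ hk1pos]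
      have hq : 4*Real.log (Δ:ℝ)*((Δ:ℝ)/(2*Real.log (Δ:ℝ))) = 2*(Δ:ℝ) := by
        field_simp
        ring
      nlinarith [hk1, hlogpos]
    rw [hrdef]
    linarith
  have hrΔ : r ≤ (Δ:ℝ)^(ε/200) := le_trans hrlog hlog5
  have hrl : r^ℓ ≤ (Δ:ℝ)^(ε*(ℓ:ℝ)/200) := by
    calc r^ℓ ≤ ((Δ:ℝ)^(ε/200))^ℓ := pow_le_pow_left₀ (le_of_lt hrpos) hrΔ ℓ
      _ = (Δ:ℝ)^(ε/200 * (ℓ:ℝ)) := by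
          rw [← Real.rpow_natCast ((Δ:ℝ)^(ε/200)) ℓ, ← Real.rpow_mul (le_of_lt hΔ0)]
      _ = (Δ:ℝ)^(ε*(ℓ:ℝ)/200) := by
          congr 1
          ring
  set t : ℝ := (r^ℓ)⁻¹ with htdef
  have hrlpos : 0 < r^ℓ := pow_pos hrpos ℓ
  have ht0 : 0 ≤ t := le_of_lt (inv_pos.mpr hrlpos)
  have htr : t * r^ℓ = 1 := inv_mul_cancel₀ (ne_of_gt hrlpos)
  have hεℓ : 50 ≤ ε * (ℓ:ℝ) := by
    have h1 : (50:ℝ)/ε ≤ (⌈(50:ℝ)/ε⌉₊ : ℝ) := Nat.le_ceil _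
    have h2 : ((⌈(50:ℝ)/ε⌉₊ : ℕ) : ℝ) ≤ (ℓ:ℝ) := by exact_mod_cast le_of_lt hℓ
    rw [div_le_iff₀ hε0] at h1
    nlinarith
  set A : ℝ := (Δ:ℝ)^(ε*(ℓ:ℝ)/8) with hAdef
  set B : ℝ := (Δ:ℝ)^(ε*(ℓ:ℝ)/10) with hBdef
  have hΔ1 : (1:ℝ) ≤ (Δ:ℝ) := by linarith
  have hB1 : 1 ≤ B := by
    rw [hBdef]
    calc (1:ℝ) = (Δ:ℝ)^(0:ℝ) := (Real.rpow_zero _).symm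
      _ ≤ (Δ:ℝ)^(ε*(ℓ:ℝ)/10) := Real.rpow_le_rpow_of_exponent_le hΔ1 (by positivity)
  have h50 : 2 ≤ (Δ:ℝ)^(ε*(ℓ:ℝ)/50) := by
    calc (2:ℝ) ≤ (Δ:ℝ) := by linarith
      _ = (Δ:ℝ)^(1:ℝ) := (Real.rpow_one _).symm
      _ ≤ (Δ:ℝ)^(ε*(ℓ:ℝ)/50) := Real.rpow_le_rpow_of_exponent_le hΔ1 (by linarith)
  have hA0 : 0 ≤ A := le_of_lt (Real.rpow_pos_of_pos hΔ0 _)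
  have hsplitExp : A / (Δ:ℝ)^(ε*(ℓ:ℝ)/200) = B * (Δ:ℝ)^(ε*(ℓ:ℝ)/50) := by
    rw [hAdef, hBdef, ← Real.rpow_add hΔ0, div_eq_iff (ne_of_gt (Real.rpow_pos_of_pos hΔ0 _)),
      ← Real.rpow_add hΔ0]
    congr 1
    ring
  have htA : B + 1 ≤ t * A := by
    have h1 : t * A = A / r^ℓ := by
      rw [htdef]
      ring
    have hΔ200pos : 0 < (Δ:ℝ)^(ε*(ℓ:ℝ)/200) := Real.rpow_pos_of_pos hΔ0 _
    have h2 : A / (Δ:ℝ)^(ε*(ℓ:ℝ)/200) ≤ A / r^ℓ := by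
      gcongr
    have h3 : B + 1 ≤ B * (Δ:ℝ)^(ε*(ℓ:ℝ)/50) := by nlinarith [hB1, h50]
    rw [h1]
    calc B + 1 ≤ B * (Δ:ℝ)^(ε*(ℓ:ℝ)/50) := h3
      _ = A / (Δ:ℝ)^(ε*(ℓ:ℝ)/200) := hsplitExp.symm
      _ ≤ A / r^ℓ := h2
  -- the coupling
  refine ⟨kemCoupling Δ ℓ k c₁ c₂, kemCoupling_isCoupling hne, ?_⟩
  rw [kemCoupling_tail hne A]
  set D : ℝ := (Nat.card {σ : TVertex Δ ℓ → Fin k //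
      ProperColoring Δ ℓ k σ ∧ σ (troot Δ ℓ) = c₁} : ℝ) with hDdef
  have hGG0 : GG Δ c₁ c₂ 0 ℓ c₁ = D := NN_eq_card Δ c₁ c₂ ℓ c₁
  have hD : 0 < D := by
    rw [← hGG0]
    exact NN_pos Δ c₁ c₂ hne ℓ
  set cardBad : ℝ := (Nat.card {σ : TVertex Δ ℓ → Fin k //
      (ProperColoring Δ ℓ k σ ∧ σ (troot Δ ℓ) = c₁) ∧ A < (Zch c₁ c₂ σ : ℝ)} : ℝ)
    with hcbdef
  have hch : cardBad * Real.exp (t * A) ≤ GG Δ c₁ c₂ t ℓ c₁ :=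
    chernoff Δ c₁ c₂ t A ht0 ℓ
  have hm : 2 * (Δ:ℝ) ≤ (r - 1) * ((k:ℝ) - 1) := by
    rw [hrdef, add_sub_cancel_right, div_mul_cancel₀ _ (ne_of_gt hk1pos)]
  have hFb : GG Δ c₁ c₂ t ℓ c₁ ≤ Real.exp 1 * D := by
    have := F_bound Δ c₁ c₂ hne t r ht0 hr1 hm ℓ (le_of_eq htr)
    rwa [htr, hGG0] at this
  have hchain : cardBad * Real.exp (t * A) ≤ Real.exp 1 * D := le_trans hch hFb
  have hexp : Real.exp (1 - t*A) ≤ Real.exp (-B) := by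
    rw [Real.exp_le_exp]
    linarith
  have hle : cardBad ≤ Real.exp (1 - t*A) * D := by
    refine le_of_mul_le_mul_right ?_ (Real.exp_pos (t*A))
    have he : Real.exp (1 - t*A) * Real.exp (t*A) = Real.exp 1 := by
      rw [← Real.exp_add]
      ring_nf
    calc cardBad * Real.exp (t*A) ≤ Real.exp 1 * D := hchain
      _ = Real.exp (1 - t*A) * D * Real.exp (t*A) := by rw [mul_right_comm, he]
  rw [div_le_iff₀ hD]
  exact le_trans hle (mul_le_mul_of_nonneg_right hexp (le_of_lt hD))
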